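/- (Frank–Wolfe convergence, O(1/t), line-search step size.) Let E be a real inner product space, n > 0 a real number, and Ω ⊆ E a nonempty convex set with ‖x − y‖² ≤ 2n for all x, y ∈ Ω. Let f : E → ℝ be convex and differentiable with L-Lipschitz gradient (L > 0), and let F* ∈ Ω satisfy f(F*) ≤ f(P) for all P ∈ Ω. Let F⁰ ∈ Ω satisfy f(F⁰) − f(F*) ≤ (14/3)·n·L. Suppose at each step P^t ∈ Ω satisfies ⟨∇f(F^t), P^t⟩ ≤ ⟨∇f(F^t), P⟩ for all P ∈ Ω, and F^{t+1} = (1 − μ_t)F^t + μ_t P^t for some μ_t ∈ [0,1] chosen so that f(F^{t+1}) ≤ f((1 − μ)F^t + μ P^t) for all μ ∈ [0,1]. Then for every t ≥ 1, f(F^t) − f(F*) ≤ 4nL/(t+1). -/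

import Mathlib

open scoped RealInnerProductSpace Topology

section Aux
variable {E : Type*} [NormedAddCommGroup E] [InnerProductSpace ℝ E] [CompleteSpace E]

lemma line_hasDerivAt (f : E → ℝ) (f' : E → E) (hf : ∀ x, HasGradientAt f (f' x) x)
    (x v : E) (s : ℝ) :
    HasDerivAt (fun s : ℝ => f (x + s • v)) ⟪f' (x + s • v), v⟫ s := by
  have hc : HasDerivAt (fun s : ℝ => x + s • v) v s := by
    simpa using ((hasDerivAt_id s).smul_const v).const_add x
  have := ((hf (x + s • v)).hasFDerivAt.comp_hasDerivAt s hc)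
  simpa [InnerProductSpace.toDual_apply_apply, Function.comp_def] using this

lemma grad_convex_ineq (f : E → ℝ) (f' : E → E)
    (hconv : ConvexOn ℝ Set.univ f) (hf : ∀ x, HasGradientAt f (f' x) x)
    (x y : E) : f x + ⟪f' x, y - x⟫ ≤ f y := by
  set g : ℝ → ℝ := fun s => f (x + s • (y - x)) with hg
  have hderiv : HasDerivAt g ⟪f' x, y - x⟫ 0 := by
    simpa using line_hasDerivAt f f' hf x (y - x) 0
  have htend : Filter.Tendsto (slope g 0) (𝓝[>] 0) (𝓝 ⟪f' x, y - x⟫) :=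
    ((hasDerivAt_iff_tendsto_slope.mp hderiv).mono_left
      (nhdsWithin_mono _ (by intro s hs; exact ne_of_gt hs)))
  have hle : ⟪f' x, y - x⟫ ≤ f y - f x := by
    refine le_of_tendsto htend ?_
    filter_upwards [Ioc_mem_nhdsGT_of_mem (by norm_num : (0:ℝ) ∈ Set.Ico 0 1)] with s hs
    obtain ⟨hs0, hs1⟩ := hs
    have hcomb : g s ≤ (1 - s) * f x + s * f y := by
      have := hconv.2 (Set.mem_univ x) (Set.mem_univ y)
        (by linarith : (0:ℝ) ≤ 1 - s) hs0.le (by ring)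
      have heq : (1 - s) • x + s • y = x + s • (y - x) := by
        rw [smul_sub]; module
      simpa [hg, heq] using this
    have hgs0 : g 0 = f x := by simp [hg]
    have hslope : slope g 0 s = (g s - g 0) / s := by simp [slope_def_field]
    rw [hslope, div_le_iff₀ hs0, hgs0]
    nlinarith
  linarith

lemma descent_lemma (f : E → ℝ) (f' : E → E) (hf : ∀ x, HasGradientAt f (f' x) x)
    (L : ℝ) (hL : 0 < L) (hLip : ∀ x y, ‖f' x - f' y‖ ≤ L * ‖x - y‖)
    (x v : E) : f (x + v) ≤ f x + ⟪f' x, v⟫ + L / 2 * ‖v‖ ^ 2 := by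
  set φ : ℝ → ℝ := fun s => f x + s * ⟪f' x, v⟫ + L * ‖v‖ ^ 2 * s ^ 2 / 2 - f (x + s • v)
    with hφdef
  have hφ : ∀ s : ℝ, HasDerivAt φ
      (⟪f' x, v⟫ + L * ‖v‖ ^ 2 * s - ⟪f' (x + s • v), v⟫) s := by
    intro s
    have h1 : HasDerivAt (fun s : ℝ => f x + s * ⟪f' x, v⟫ + L * ‖v‖ ^ 2 * s ^ 2 / 2)
        (⟪f' x, v⟫ + L * ‖v‖ ^ 2 * s) s := by
      have ha : HasDerivAt (fun s : ℝ => s * ⟪f' x, v⟫) ⟪f' x, v⟫ s := by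
        simpa using (hasDerivAt_id s).mul_const ⟪f' x, v⟫
      have hb : HasDerivAt (fun s : ℝ => L * ‖v‖ ^ 2 * s ^ 2 / 2) (L * ‖v‖ ^ 2 * s) s := by
        have := ((hasDerivAt_pow 2 s).const_mul (L * ‖v‖ ^ 2)).div_const 2
        exact this.congr_deriv (by push_cast; ring)
      simpa [Pi.add_def] using (ha.const_add (f x)).add hb
    exact h1.sub (line_hasDerivAt f f' hf x v s)
  have hmono : MonotoneOn φ (Set.Ici 0) := by
    apply monotoneOn_of_hasDerivWithinAt_nonneg (convex_Ici 0)
      (fun s _ => (hφ s).continuousAt.continuousWithinAt)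
      (fun s _ => (hφ s).hasDerivWithinAt)
    intro s hs
    rw [interior_Ici] at hs
    have hinner : ⟪f' (x + s • v) - f' x, v⟫ ≤ L * s * ‖v‖ ^ 2 := by
      calc ⟪f' (x + s • v) - f' x, v⟫ ≤ ‖f' (x + s • v) - f' x‖ * ‖v‖ :=
            real_inner_le_norm _ _
        _ ≤ (L * ‖x + s • v - x‖) * ‖v‖ := by
            exact mul_le_mul_of_nonneg_right (hLip _ _) (norm_nonneg _)
        _ = L * s * ‖v‖ ^ 2 := by
            rw [add_sub_cancel_left, norm_smul, Real.norm_eq_abs, abs_of_pos hs]; ring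
    have : ⟪f' (x + s • v), v⟫ - ⟪f' x, v⟫ = ⟪f' (x + s • v) - f' x, v⟫ := by
      rw [inner_sub_left]
    nlinarith
  have h01 := hmono (Set.self_mem_Ici) (by norm_num : (1:ℝ) ∈ Set.Ici 0) zero_le_one
  have hφ0 : φ 0 = 0 := by simp [hφdef]
  have hφ1 : φ 1 = f x + ⟪f' x, v⟫ + L * ‖v‖ ^ 2 / 2 - f (x + v) := by simp [hφdef]
  rw [hφ0, hφ1] at h01
  linarith
end Aux

/-- Frank–Wolfe convergence at rate `O(1/t)` with the line-search step size. -/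
theorem frank_wolfe_rate_line_search {E : Type*} [NormedAddCommGroup E]
    [InnerProductSpace ℝ E] [CompleteSpace E]
    (n : ℝ) (hn : 0 < n) (Ω : Set E) (hne : Ω.Nonempty) (hΩ : Convex ℝ Ω)
    (hdiam : ∀ x ∈ Ω, ∀ y ∈ Ω, ‖x - y‖ ^ 2 ≤ 2 * n)
    (f : E → ℝ) (f' : E → E)
    (hconv : ConvexOn ℝ Set.univ f) (hf : ∀ x, HasGradientAt f (f' x) x)
    (L : ℝ) (hL : 0 < L) (hLip : ∀ x y, ‖f' x - f' y‖ ≤ L * ‖x - y‖)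
    (Fstar : E) (hFstar : Fstar ∈ Ω) (hopt : ∀ P ∈ Ω, f Fstar ≤ f P)
    (F P : ℕ → E) (μ : ℕ → ℝ) (hF0 : F 0 ∈ Ω)
    (hinit : f (F 0) - f Fstar ≤ (14 / 3) * n * L)
    (hP : ∀ t, P t ∈ Ω)
    (hPmin : ∀ t, ∀ Q ∈ Ω, ⟪f' (F t), P t⟫ ≤ ⟪f' (F t), Q⟫)
    (hμ : ∀ t, μ t ∈ Set.Icc (0 : ℝ) 1)
    (hupd : ∀ t : ℕ, F (t + 1) = (1 - μ t) • F t + μ t • P t)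
    (hline : ∀ t : ℕ, ∀ ν ∈ Set.Icc (0 : ℝ) 1,
      f (F (t + 1)) ≤ f ((1 - ν) • F t + ν • P t)) :
    ∀ t : ℕ, 1 ≤ t → f (F t) - f Fstar ≤ 4 * n * L / ((t : ℝ) + 1) := by
  -- all iterates stay in Ω
  have hmem : ∀ t, F t ∈ Ω := by
    intro t
    induction t with
    | zero => exact hF0
    | succ t ih =>
      rw [hupd t]
      exact hΩ ih (hP t) (by linarith [(hμ t).2]) (hμ t).1 (by ring)
  -- one-step estimate
  have hstep : ∀ t : ℕ, ∀ ν ∈ Set.Icc (0 : ℝ) 1,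
      f (F (t + 1)) - f Fstar ≤ (1 - ν) * (f (F t) - f Fstar) + ν ^ 2 * (n * L) := by
    intro t ν hν
    obtain ⟨hν0, hν1⟩ := hν
    have h1 : f (F (t + 1)) ≤ f (F t + ν • (P t - F t)) := by
      have heq : (1 - ν) • F t + ν • P t = F t + ν • (P t - F t) := by
        rw [smul_sub]; module
      simpa [heq] using hline t ν ⟨hν0, hν1⟩
    have h2 : f (F t + ν • (P t - F t)) ≤ f (F t) + ⟪f' (F t), ν • (P t - F t)⟫
        + L / 2 * ‖ν • (P t - F t)‖ ^ 2 :=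
      descent_lemma f f' hf L hL hLip _ _
    have h3 : ⟪f' (F t), ν • (P t - F t)⟫ = ν * ⟪f' (F t), P t - F t⟫ :=
      real_inner_smul_right _ _ _
    have h4 : ⟪f' (F t), P t - F t⟫ ≤ f Fstar - f (F t) := by
      have ha := hPmin t Fstar hFstar
      have hb := grad_convex_ineq f f' hconv hf (F t) Fstar
      rw [inner_sub_right] at *
      linarith
    have h5 : ‖ν • (P t - F t)‖ ^ 2 ≤ ν ^ 2 * (2 * n) := by
      rw [norm_smul, Real.norm_eq_abs, abs_of_nonneg hν0, mul_pow]
      exact mul_le_mul_of_nonneg_left (hdiam _ (hP t) _ (hmem t)) (by positivity)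
    have h6 : L / 2 * ‖ν • (P t - F t)‖ ^ 2 ≤ L / 2 * (ν ^ 2 * (2 * n)) :=
      mul_le_mul_of_nonneg_left h5 (by positivity)
    have h7 : ν * ⟪f' (F t), P t - F t⟫ ≤ ν * (f Fstar - f (F t)) :=
      mul_le_mul_of_nonneg_left h4 hν0
    rw [h3] at h2
    nlinarith
  -- main induction
  intro t ht
  induction t with
  | zero => omega
  | succ t ih =>
    rcases Nat.eq_or_lt_of_le ht with h | h
    · -- base case t + 1 = 1
      have ht0 : t = 0 := by omega
      subst ht0
      have hst := hstep 0 1 ⟨zero_le_one, le_refl 1⟩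
      push_cast
      rw [show (4:ℝ) * n * L / (1 + 1) = 2 * n * L from by ring]
      nlinarith
    · have ht1 : 1 ≤ t := by omega
      have ihh := ih ht1
      set s : ℝ := (t : ℝ) with hs
      have hs1 : (1:ℝ) ≤ s := by rw [hs]; exact_mod_cast ht1
      have hd1 : (0:ℝ) < s + 1 := by linarith
      have hd2 : (0:ℝ) < s + 2 := by linarith
      have hν : (2 / (s + 2)) ∈ Set.Icc (0:ℝ) 1 := by
        constructor
        · positivity
        · rw [div_le_one hd2]; linarith
      have hkey := hstep t (2 / (s + 2)) hν
      have hmul : (1 - 2 / (s + 2)) * (f (F t) - f Fstar)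
          ≤ (1 - 2 / (s + 2)) * (4 * n * L / (s + 1)) := by
        apply mul_le_mul_of_nonneg_left ihh
        have : 2 / (s + 2) ≤ 1 := hν.2
        linarith
      have harith : (1 - 2 / (s + 2)) * (4 * n * L / (s + 1)) + (2 / (s + 2)) ^ 2 * (n * L)
          ≤ 4 * n * L / (s + 2) := by
        rw [← sub_nonneg]
        have key : 4 * n * L / (s + 2) - ((1 - 2 / (s + 2)) * (4 * n * L / (s + 1))
            + (2 / (s + 2)) ^ 2 * (n * L)) = 4 * n * L / ((s + 1) * (s + 2) ^ 2) := by
          field_simp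
          ring
        rw [key]
        positivity
      have hcast : ((t + 1 : ℕ) : ℝ) + 1 = s + 2 := by push_cast [hs]; ring
      rw [hcast]
      calc f (F (t + 1)) - f Fstar
          ≤ (1 - 2 / (s + 2)) * (f (F t) - f Fstar) + (2 / (s + 2)) ^ 2 * (n * L) := hkey
        _ ≤ (1 - 2 / (s + 2)) * (4 * n * L / (s + 1)) + (2 / (s + 2)) ^ 2 * (n * L) := by
            linarith
        _ ≤ 4 * n * L / (s + 2) := harith
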